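/- Assume G is connected and let 0 = λ₀ < λ₁ ≤ … ≤ λ_{n−1} be the eigenvalues of the normalized Laplacian 𝓛 listed in increasing order (with multiplicity). For η ∈ ℝ define the convergence rate index r(η) = max_{1 ≤ i ≤ n−1} |1 − (1 − η)λ_i|, which is the maximum modulus of the eigenvalues of F_η = ηI + (1 − η)F₀ other than the eigenvalue 1 associated with 𝟙. Then for every η ∈ ℝ, r(η) ≥ (λ_{n−1} − λ₁)/(λ₁ + λ_{n−1}), and equality holds at the optimal parameter η* = 1 − 2/(λ₁ + λ_{n−1}) = 1 − 1/ς_𝓛, where ς_𝓛 = (λ₁ + λ_{n−1})/2. -/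

import Mathlib

open Matrix

/-- The convergence rate index `r(η)`: the maximum of `|1 - (1 - η) λ_i|` over the
eigenvalues `λ_i` of the normalized Laplacian with index `i ≠ 0` (i.e. omitting the
eigenvalue `λ_0 = 0` of `𝓛`, corresponding to the eigenvalue `1` of `F_η` associated
with the all-ones vector). -/
noncomputable def cri (n : ℕ) (lam : Fin n → ℝ) (η : ℝ) : ℝ :=
  ⨆ i : {i : Fin n // (i : ℕ) ≠ 0}, |1 - (1 - η) * lam i.1|

open Polynomial in
lemma charpoly_conj_aux {n : ℕ} (P Q M : Matrix (Fin n) (Fin n) ℝ) (hPQ : P * Q = 1) :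
    (P * M * Q).charpoly = M.charpoly := by
  have hPQ' : P.map (C : ℝ →+* ℝ[X]) * Q.map (C : ℝ →+* ℝ[X]) = 1 := by
    rw [← Matrix.map_mul, hPQ]
    exact Matrix.map_one _ (map_zero C) (map_one C)
  have key : charmatrix (P * M * Q) =
      P.map (C : ℝ →+* ℝ[X]) * charmatrix M * Q.map (C : ℝ →+* ℝ[X]) := by
    unfold charmatrix
    simp only [RingHom.mapMatrix_apply, Matrix.mul_sub, Matrix.sub_mul, Matrix.map_mul]
    congr 1
    rw [← (Matrix.scalar_commute (X : ℝ[X]) (Commute.all X) (P.map (C : ℝ →+* ℝ[X]))).eq,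
      Matrix.mul_assoc, hPQ', Matrix.mul_one]
  show (charmatrix (P * M * Q)).det = (charmatrix M).det
  rw [key, det_mul, det_mul]
  have h1 : (P.map (C : ℝ →+* ℝ[X])).det * (Q.map (C : ℝ →+* ℝ[X])).det = 1 := by
    rw [← det_mul, hPQ', det_one]
  calc (P.map (C : ℝ →+* ℝ[X])).det * (charmatrix M).det * (Q.map (C : ℝ →+* ℝ[X])).det
      = ((P.map (C : ℝ →+* ℝ[X])).det * (Q.map (C : ℝ →+* ℝ[X])).det) * (charmatrix M).det := by
        ring
    _ = (charmatrix M).det := by rw [h1, one_mul]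

open Polynomial in
lemma charpoly_affine_aux {n : ℕ} (M : Matrix (Fin n) (Fin n) ℝ) (lam : Fin n → ℝ)
    (h : M.charpoly.roots = Multiset.map lam Finset.univ.val) (a b : ℝ) :
    (a • (1 : Matrix (Fin n) (Fin n) ℝ) + b • M).charpoly.roots
      = Multiset.map (fun i => a + b * lam i) Finset.univ.val := by
  have hcardv : Multiset.card (Finset.univ.val : Multiset (Fin n)) = n := by
    simp [← Finset.card_def]
  have hM : M.charpoly = (Multiset.map (fun i => X - C (lam i)) Finset.univ.val).prod := by
    have hcard : Multiset.card M.charpoly.roots = M.charpoly.natDegree := by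
      rw [h, Multiset.card_map, hcardv, Matrix.charpoly_natDegree_eq_dim]
      simp
    have h2 := prod_multiset_X_sub_C_of_monic_of_roots_card_eq M.charpoly_monic hcard
    rw [h, Multiset.map_map] at h2
    exact h2.symm
  suffices hP : (a • (1 : Matrix (Fin n) (Fin n) ℝ) + b • M).charpoly
      = (Multiset.map (fun i => X - C (a + b * lam i)) Finset.univ.val).prod by
    rw [hP, show (fun i => X - C (a + b * lam i))
        = (fun r : ℝ => X - C r) ∘ (fun i => a + b * lam i) from rfl,
      ← Multiset.map_map, roots_multiset_prod_X_sub_C]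
  by_cases hb : b = 0
  · subst hb
    simp only [zero_smul, add_zero, zero_mul]
    rw [smul_one_eq_diagonal]
    rw [Matrix.charpoly_of_upperTriangular _ (Matrix.blockTriangular_diagonal _)]
    rw [Finset.prod_eq_multiset_prod]
    congr 1
    exact Multiset.map_congr rfl (fun i _ => by rw [Matrix.diagonal_apply_eq])
  · set q : ℝ[X] := C b⁻¹ * (X - C a) with hq
    have hterm : ∀ r : ℝ, C b * (q - C r) = X - C (a + b * r) := by
      intro r
      rw [hq, mul_sub, ← mul_assoc, ← C_mul, mul_inv_cancel₀ hb, C_1, one_mul, ← C_mul, C_add]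
      ring
    have key : charmatrix (a • (1 : Matrix (Fin n) (Fin n) ℝ) + b • M)
        = (C b) • (charmatrix M).map (aeval q) := by
      ext i j
      by_cases hij : i = j
      · subst hij
        simp only [charmatrix_apply_eq, Matrix.smul_apply, Matrix.map_apply, Matrix.add_apply,
          Matrix.one_apply_eq, smul_eq_mul, mul_one, map_sub, aeval_X, aeval_C,
          Polynomial.algebraMap_eq]
        rw [← hterm (M i i), hq]
      · simp only [charmatrix_apply_ne _ _ _ hij, Matrix.smul_apply, Matrix.map_apply,
          Matrix.add_apply, Matrix.one_apply_ne hij, smul_eq_mul, mul_zero, zero_add, map_neg,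
          aeval_C, Polynomial.algebraMap_eq, ← C_mul, mul_neg]
    show (charmatrix _).det = _
    rw [key, Matrix.det_smul]
    have hdet : ((charmatrix M).map (aeval q)).det = aeval q M.charpoly := by
      have := RingHom.map_det ((aeval q : ℝ[X] →ₐ[ℝ] ℝ[X]) : ℝ[X] →+* ℝ[X]) (charmatrix M)
      have h' : ((charmatrix M).map (aeval q)).det = aeval q (charmatrix M).det := by
        simpa using this.symm
      exact h'
    rw [hdet, hM, map_multiset_prod, Multiset.map_map]
    have hmapeq : Multiset.map ((aeval q) ∘ fun i => X - C (lam i)) Finset.univ.val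
        = Multiset.map (fun i => q - C (lam i)) Finset.univ.val :=
      Multiset.map_congr rfl (fun i _ => by
        simp [Function.comp, map_sub, aeval_X, aeval_C, Polynomial.algebraMap_eq])
    rw [hmapeq]
    have hrhs : Multiset.map (fun i => X - C (a + b * lam i)) Finset.univ.val
        = Multiset.map (fun i => C b * (q - C (lam i))) Finset.univ.val :=
      Multiset.map_congr rfl (fun i _ => (hterm (lam i)).symm)
    rw [hrhs, Multiset.prod_map_mul]
    congr 1
    rw [Multiset.map_const', Multiset.prod_replicate, hcardv]
    simp

theorem stmt_18 (n : ℕ) (hn : 2 ≤ n) (G : SimpleGraph (Fin n)) [DecidableRel G.Adj]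
    (hdeg : ∀ i, 0 < G.degree i) (hconn : G.Connected)
    (A D Dneghalf L NL F0 : Matrix (Fin n) (Fin n) ℝ)
    (hA : A = G.adjMatrix ℝ)
    (hD : D = Matrix.diagonal fun i => (G.degree i : ℝ))
    (hDneghalf : Dneghalf = Matrix.diagonal fun i => (Real.sqrt (G.degree i : ℝ))⁻¹)
    (hL : L = D - A)
    (hNL : NL = Dneghalf * L * Dneghalf)
    (hF0 : F0 = D⁻¹ * A)
    (lam : Fin n → ℝ)
    (hroots : NL.charpoly.roots = Multiset.map lam Finset.univ.val)
    (hmono : Monotone lam)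
    (h0 : lam ⟨0, by omega⟩ = 0)
    (h1 : 0 < lam ⟨1, by omega⟩) :
    (∀ η : ℝ,
      (η • (1 : Matrix (Fin n) (Fin n) ℝ) + (1 - η) • F0).charpoly.roots =
        Multiset.map (fun i => 1 - (1 - η) * lam i) Finset.univ.val) ∧
    (∀ η : ℝ,
      (lam ⟨n - 1, by omega⟩ - lam ⟨1, by omega⟩) /
          (lam ⟨1, by omega⟩ + lam ⟨n - 1, by omega⟩) ≤ cri n lam η) ∧
    cri n lam (1 - 2 / (lam ⟨1, by omega⟩ + lam ⟨n - 1, by omega⟩)) =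
      (lam ⟨n - 1, by omega⟩ - lam ⟨1, by omega⟩) /
        (lam ⟨1, by omega⟩ + lam ⟨n - 1, by omega⟩) := by
  have hd : ∀ i, (0 : ℝ) < (G.degree i : ℝ) := fun i => by exact_mod_cast hdeg i
  have hsq : ∀ i, Real.sqrt ((G.degree i : ℝ)) ≠ 0 :=
    fun i => Real.sqrt_ne_zero'.mpr (hd i)
  set Dhalf : Matrix (Fin n) (Fin n) ℝ :=
    Matrix.diagonal fun i => Real.sqrt ((G.degree i : ℝ)) with hDhalf
  have hPQ : Dneghalf * Dhalf = 1 := by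
    rw [hDneghalf, hDhalf, Matrix.diagonal_mul_diagonal]
    have : (fun i => (Real.sqrt ((G.degree i : ℝ)))⁻¹ * Real.sqrt ((G.degree i : ℝ)))
        = fun _ : Fin n => (1 : ℝ) := funext fun i => inv_mul_cancel₀ (hsq i)
    rw [this, Matrix.diagonal_one]
  have hDD : Dneghalf * Dneghalf = Matrix.diagonal fun i => ((G.degree i : ℝ))⁻¹ := by
    rw [hDneghalf, Matrix.diagonal_mul_diagonal]
    have : (fun i => (Real.sqrt ((G.degree i : ℝ)))⁻¹ * (Real.sqrt ((G.degree i : ℝ)))⁻¹)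
        = fun i : Fin n => ((G.degree i : ℝ))⁻¹ := funext fun i => by
      rw [← mul_inv, Real.mul_self_sqrt (hd i).le]
    rw [this]
  have hDinv : D⁻¹ = Matrix.diagonal fun i => ((G.degree i : ℝ))⁻¹ := by
    apply Matrix.inv_eq_right_inv
    rw [hD, Matrix.diagonal_mul_diagonal]
    have : (fun i => (G.degree i : ℝ) * ((G.degree i : ℝ))⁻¹) = fun _ : Fin n => (1 : ℝ) :=
      funext fun i => mul_inv_cancel₀ (hd i).ne'
    rw [this, Matrix.diagonal_one]
  have hNL' : NL = 1 - Dneghalf * A * Dneghalf := by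
    rw [hNL, hL, Matrix.mul_sub, Matrix.sub_mul]
    congr 1
    rw [hDneghalf, hD, Matrix.diagonal_mul_diagonal, Matrix.diagonal_mul_diagonal]
    have : (fun i => (Real.sqrt ((G.degree i : ℝ)))⁻¹ * (G.degree i : ℝ)
        * (Real.sqrt ((G.degree i : ℝ)))⁻¹) = fun _ : Fin n => (1 : ℝ) := by
      funext i
      rw [show (Real.sqrt ((G.degree i : ℝ)))⁻¹ * (G.degree i : ℝ)
            * (Real.sqrt ((G.degree i : ℝ)))⁻¹
          = (G.degree i : ℝ) * (Real.sqrt ((G.degree i : ℝ)) * Real.sqrt ((G.degree i : ℝ)))⁻¹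
          from by ring, Real.mul_self_sqrt (hd i).le, mul_inv_cancel₀ (hd i).ne']
    rw [this, Matrix.diagonal_one]
  have keyconj : ∀ η : ℝ, η • (1 : Matrix (Fin n) (Fin n) ℝ) + (1 - η) • F0
      = Dneghalf * ((1 : ℝ) • (1 : Matrix (Fin n) (Fin n) ℝ) + (-(1 - η)) • NL) * Dhalf := by
    intro η
    rw [hNL', hF0, hDinv]
    have expand : (1 : ℝ) • (1 : Matrix (Fin n) (Fin n) ℝ)
        + (-(1 - η)) • ((1 : Matrix (Fin n) (Fin n) ℝ) - Dneghalf * A * Dneghalf)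
        = η • (1 : Matrix (Fin n) (Fin n) ℝ) + (1 - η) • (Dneghalf * A * Dneghalf) := by
      module
    rw [expand]
    simp only [Matrix.mul_add, Matrix.add_mul, Matrix.mul_smul, Matrix.smul_mul, Matrix.mul_one]
    rw [show Dneghalf * (Dneghalf * A * Dneghalf) * Dhalf
        = (Dneghalf * Dneghalf) * A * (Dneghalf * Dhalf) from by simp only [Matrix.mul_assoc]]
    rw [hDD, hPQ, Matrix.mul_one]
  have part1 : ∀ η : ℝ,
      (η • (1 : Matrix (Fin n) (Fin n) ℝ) + (1 - η) • F0).charpoly.roots =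
        Multiset.map (fun i => 1 - (1 - η) * lam i) Finset.univ.val := by
    intro η
    rw [keyconj η, charpoly_conj_aux _ _ _ hPQ,
      charpoly_affine_aux NL lam hroots 1 (-(1 - η))]
    exact Multiset.map_congr rfl (fun i _ => by ring)
  -- abbreviations for the two extreme eigenvalues
  set s : ℝ := lam ⟨1, by omega⟩ with hsdef
  set t : ℝ := lam ⟨n - 1, by omega⟩ with htdef
  have hst : s ≤ t := hmono (by rw [Fin.le_def]; simp only []; omega)
  have hs : 0 < s := h1
  have ht : 0 < t := lt_of_lt_of_le hs hst
  have hsum : 0 < s + t := by linarith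
  haveI hne : Nonempty {i : Fin n // (i : ℕ) ≠ 0} :=
    ⟨⟨⟨1, by omega⟩, by simp⟩⟩
  have bdd : ∀ η : ℝ, BddAbove (Set.range fun i : {i : Fin n // (i : ℕ) ≠ 0} =>
      |1 - (1 - η) * lam i.1|) := fun η => Set.Finite.bddAbove (Set.finite_range _)
  have part2 : ∀ η : ℝ, (t - s) / (s + t) ≤ cri n lam η := by
    intro η
    have hle1 : |1 - (1 - η) * s| ≤ cri n lam η :=
      le_ciSup (bdd η) ⟨⟨1, by omega⟩, by simp⟩
    have hlem : |1 - (1 - η) * t| ≤ cri n lam η :=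
      le_ciSup (bdd η) ⟨⟨n - 1, by omega⟩, by simp; omega⟩
    rw [div_le_iff₀ hsum]
    have a1 := le_abs_self (1 - (1 - η) * s)
    have a2 := neg_abs_le (1 - (1 - η) * t)
    nlinarith [mul_le_mul_of_nonneg_left hle1 ht.le, mul_le_mul_of_nonneg_left hlem hs.le,
      mul_le_mul_of_nonneg_left a1 ht.le, mul_le_mul_of_nonneg_left a2 hs.le]
  refine ⟨part1, part2, ?_⟩
  have hc : 1 - (1 - 2 / (s + t)) = 2 / (s + t) := by ring
  apply le_antisymm
  · apply ciSup_le
    rintro ⟨i, hi⟩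
    have hlo : s ≤ lam i := hmono (by rw [Fin.le_def]; simp only []; omega)
    have hhi : lam i ≤ t := hmono (by rw [Fin.le_def]; have := i.isLt; simp only []; omega)
    rw [hc, abs_le]
    have key : 1 - 2 / (s + t) * lam i = (s + t - 2 * lam i) / (s + t) := by
      field_simp
    constructor
    · rw [key, show -((t - s) / (s + t)) = (-(t - s)) / (s + t) from by ring,
        div_le_div_iff₀ hsum hsum]
      nlinarith [mul_nonneg (show (0:ℝ) ≤ 2 * t - 2 * lam i by linarith) hsum.le]
    · rw [key, div_le_div_iff₀ hsum hsum]
      nlinarith [mul_nonneg (show (0:ℝ) ≤ 2 * lam i - 2 * s by linarith) hsum.le]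
  · have hval : |1 - (1 - (1 - 2 / (s + t))) * s| = (t - s) / (s + t) := by
      rw [hc]
      have : 1 - 2 / (s + t) * s = (t - s) / (s + t) := by
        field_simp
        ring
      rw [this, abs_of_nonneg (div_nonneg (by linarith) hsum.le)]
    calc (t - s) / (s + t) = |1 - (1 - (1 - 2 / (s + t))) * s| := hval.symm
      _ ≤ cri n lam (1 - 2 / (s + t)) := le_ciSup (bdd _) ⟨⟨1, by omega⟩, by simp⟩
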